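/- Let F be the free (noncommutative, unital) R-algebra on generators x_n indexed by n ∈ ℤ, and let U be the quotient of F by the two-sided ideal generated by the elements: x_0 − (1+μ); x_{n+1} − μ·x_n for all n ∈ ℤ; x_n − λ·x_n for all n ∈ ℤ; and x_{a+b} + x_{a+b+1} − x_a·x_b for all a, b ∈ ℤ. Then U is isomorphic as an R-algebra to the quotient R ⧸ ((λ−1)(μ+1)) of R by the principal ideal generated by (λ−1)(μ+1), under an isomorphism sending the class of x_n to the class of μⁿ(1+μ). -/

import Mathlib

noncomputable section

/-- The Laurent polynomial ring `ℤ[λ^{±1}, μ^{±1}]`. -/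
abbrev R : Type := AddMonoidAlgebra ℤ (ℤ × ℤ)

/-- The variable `λ`. -/
def lam : R := AddMonoidAlgebra.single (1, 0) 1

/-- The variable `μ`. -/
def mu : R := AddMonoidAlgebra.single (0, 1) 1

/-- The Laurent monomial `μⁿ` for `n : ℤ`. -/
def muPow (n : ℤ) : R := AddMonoidAlgebra.single (0, n) 1

/-- The free noncommutative unital `R`-algebra on generators `xₙ`, `n : ℤ`. -/
abbrev F : Type := FreeAlgebra R ℤ

/-- The generator `xₙ`. -/
def x (n : ℤ) : F := FreeAlgebra.ι R n

/-- The defining relations of the cord algebra of the unknot: each listed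
element is set equal to `0`, so that `RingQuot` quotients by the two-sided
ideal they generate. -/
inductive UnknotRel : F → F → Prop
  | base : UnknotRel (x 0 - algebraMap R F (1 + mu)) 0
  | sucRel (n : ℤ) : UnknotRel (x (n + 1) - algebraMap R F mu * x n) 0
  | lamRel (n : ℤ) : UnknotRel (x n - algebraMap R F lam * x n) 0
  | skein (a b : ℤ) : UnknotRel (x (a + b) + x (a + b + 1) - x a * x b) 0

/-- The cord algebra of the unknot, presented by generators and relations. -/
abbrev U : Type := RingQuot UnknotRel

lemma muPow_zero : muPow 0 = 1 := rfl
lemma muPow_one : muPow 1 = mu := rfl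
lemma muPow_add (a b : ℤ) : muPow (a + b) = muPow a * muPow b := by
  simp [muPow, AddMonoidAlgebra.single_mul_single, Prod.ext_iff]

abbrev J : Ideal R := Ideal.span {(lam - 1) * (mu + 1)}

def f0 : F →ₐ[R] R ⧸ J :=
  FreeAlgebra.lift R fun n => Ideal.Quotient.mk J (muPow n * (1 + mu))

lemma f0_x (n : ℤ) : f0 (x n) = Ideal.Quotient.mk J (muPow n * (1 + mu)) := by
  simp [f0, x]

lemma f0_rel : ∀ ⦃a b : F⦄, UnknotRel a b → f0 a = f0 b := by
  intro a b h
  induction h with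
  | base =>
    rw [map_sub, map_zero, f0_x, AlgHom.commutes, Ideal.Quotient.algebraMap_eq,
      muPow_zero, one_mul, sub_self]
  | sucRel n =>
    rw [map_sub, map_zero, map_mul, f0_x, f0_x, AlgHom.commutes,
      Ideal.Quotient.algebraMap_eq,
      ← map_mul (Ideal.Quotient.mk J) mu (muPow n * (1 + mu)),
      ← map_sub (Ideal.Quotient.mk J),
      show muPow (n + 1) * (1 + mu) - mu * (muPow n * (1 + mu)) = 0 from by
        rw [add_comm n 1, muPow_add, muPow_one]; ring,
      map_zero]
  | lamRel n =>
    rw [map_sub, map_zero, map_mul, f0_x, AlgHom.commutes,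
      Ideal.Quotient.algebraMap_eq,
      ← map_mul (Ideal.Quotient.mk J) lam (muPow n * (1 + mu)),
      ← map_sub (Ideal.Quotient.mk J),
      Ideal.Quotient.eq_zero_iff_mem, Ideal.mem_span_singleton]
    exact ⟨-muPow n, by ring⟩
  | skein a b =>
    rw [map_sub, map_add, map_zero, map_mul, f0_x, f0_x, f0_x, f0_x,
      ← map_mul (Ideal.Quotient.mk J) (muPow a * (1 + mu)) (muPow b * (1 + mu)),
      ← map_add (Ideal.Quotient.mk J),
      ← map_sub (Ideal.Quotient.mk J)]
    have h1 : muPow (a + b + 1) = muPow (a + b) * mu := by rw [muPow_add, muPow_one]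
    have h2 : muPow a * muPow b = muPow (a + b) := (muPow_add a b).symm
    rw [show muPow (a + b) * (1 + mu) + muPow (a + b + 1) * (1 + mu)
        - muPow a * (1 + mu) * (muPow b * (1 + mu)) = 0 from by
      linear_combination (1 + mu) * h1 - (1 + mu)^2 * h2, map_zero]

def fwd : U →ₐ[R] R ⧸ J := RingQuot.liftAlgHom R ⟨f0, f0_rel⟩

lemma fwd_x (n : ℤ) :
    fwd (RingQuot.mkAlgHom R UnknotRel (x n)) = Ideal.Quotient.mk J (muPow n * (1 + mu)) := by
  rw [fwd, RingQuot.liftAlgHom_mkAlgHom_apply, f0_x]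

lemma X_eq (n : ℤ) :
    RingQuot.mkAlgHom R UnknotRel (x n) = algebraMap R U (muPow n * (1 + mu)) := by
  have suc : ∀ m : ℤ, RingQuot.mkAlgHom R UnknotRel (x (m + 1))
      = algebraMap R U mu * RingQuot.mkAlgHom R UnknotRel (x m) := by
    intro m
    have h := RingQuot.mkAlgHom_rel R (UnknotRel.sucRel m)
    simp only [map_sub, map_mul, map_zero, AlgHom.commutes, sub_eq_zero] at h
    exact h
  induction n using Int.induction_on with
  | zero =>
    have h := RingQuot.mkAlgHom_rel R (UnknotRel.base)
    simp only [map_sub, map_zero, sub_eq_zero, AlgHom.commutes] at h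
    rw [muPow_zero, one_mul]
    exact h
  | succ k ih =>
    rw [suc k, ih, ← map_mul,
      show mu * (muPow (k : ℤ) * (1 + mu)) = muPow ((k : ℤ) + 1) * (1 + mu) from by
        rw [add_comm (k : ℤ) 1, muPow_add, muPow_one]; ring]
  | pred k ih =>
    have h := suc (-(k : ℤ) - 1)
    rw [show (-(k : ℤ) - 1 + 1) = -(k : ℤ) from by ring, ih] at h
    have key := congrArg (fun z => algebraMap R U (muPow (-1)) * z) h
    rw [← mul_assoc, ← map_mul, ← map_mul,
      show muPow (-1 : ℤ) * mu = 1 from by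
        rw [← muPow_one, ← muPow_add]; norm_num [muPow_zero],
      map_one, one_mul] at key
    rw [← key]
    congr 1
    rw [show (-(k : ℤ) - 1) = -1 + -(k : ℤ) from by ring, muPow_add, mul_assoc]

lemma gen_zero : algebraMap R U ((lam - 1) * (mu + 1)) = 0 := by
  have h := RingQuot.mkAlgHom_rel R (UnknotRel.lamRel 0)
  simp only [map_sub, map_mul, map_zero, AlgHom.commutes, sub_eq_zero] at h
  rw [X_eq 0] at h
  rw [show (lam - 1) * (mu + 1)
      = -(muPow 0 * (1 + mu) - lam * (muPow 0 * (1 + mu))) from by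
        rw [muPow_zero]; ring,
    map_neg, map_sub, map_mul (algebraMap R U) lam (muPow 0 * (1 + mu))]
  exact neg_eq_zero.mpr (sub_eq_zero_of_eq h)

def bwd : R ⧸ J →ₐ[R] U :=
  Ideal.Quotient.liftₐ J (Algebra.ofId R U) (by
    intro a ha
    rw [Ideal.mem_span_singleton] at ha
    obtain ⟨c, rfl⟩ := ha
    show algebraMap R U _ = 0
    rw [map_mul, gen_zero, zero_mul])

lemma bwd_mk (r : R) : bwd (Ideal.Quotient.mk J r) = algebraMap R U r := rfl

theorem unknot_cordAlgebra :
    ∃ e : U ≃ₐ[R] R ⧸ Ideal.span {(lam - 1) * (mu + 1)},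
      ∀ n : ℤ, e (RingQuot.mkAlgHom R UnknotRel (x n)) =
        Ideal.Quotient.mk (Ideal.span {(lam - 1) * (mu + 1)})
          (muPow n * (1 + mu)) := by
  have h1 : fwd.comp bwd = AlgHom.id R (R ⧸ J) := by
    apply AlgHom.ext
    intro q
    obtain ⟨r, rfl⟩ := Ideal.Quotient.mk_surjective q
    show fwd (bwd (Ideal.Quotient.mk J r)) = Ideal.Quotient.mk J r
    rw [bwd_mk]
    exact fwd.commutes r
  have h2 : bwd.comp fwd = AlgHom.id R U := by
    apply RingQuot.ringQuot_ext'
    apply FreeAlgebra.hom_ext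
    funext n
    show bwd (fwd (RingQuot.mkAlgHom R UnknotRel (x n))) = RingQuot.mkAlgHom R UnknotRel (x n)
    rw [fwd_x, bwd_mk, X_eq]
  exact ⟨AlgEquiv.ofAlgHom fwd bwd h1 h2, fun n => fwd_x n⟩
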